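/- In the two-source game, the all-direct profile (u_1 = n_1, u_2 = n_2) is a Nash equilibrium if and only if n_1 q̄ ≤ qμ/φ + n_2 + q̄. -/
import Mathlib


/-- Nash-equilibrium property for the two-source loss network.  Source `s_1` has
`u1` direct users and `v2` users relaying via `s_2`; source `s_2` has `u2` direct
users and `v1` users relaying via `s_1`.  Traffic rates are `T1 = u1 φ + v1 q̄ φ`
and `T2 = u2 φ + v2 q̄ φ` with `q̄ = 1 - q`.  The four conditions state that no
direct user and no relaying user can strictly decrease its loss rate by switching
its route (target traffic adjusted for the deviating user's own flow). -/
noncomputable def NE2 (φ μ q : ℝ) (u1 v1 u2 v2 : ℕ) : Prop :=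
  (0 < u1 →
      φ * ((u1 : ℝ) * φ + (v1 : ℝ) * (1 - q) * φ) /
          ((u1 : ℝ) * φ + (v1 : ℝ) * (1 - q) * φ + μ) ≤
        q * φ + (1 - q) * φ *
            ((u2 : ℝ) * φ + ((v2 : ℝ) + 1) * (1 - q) * φ) /
          ((u2 : ℝ) * φ + ((v2 : ℝ) + 1) * (1 - q) * φ + μ)) ∧
  (0 < v2 →
      q * φ + (1 - q) * φ *
          ((u2 : ℝ) * φ + (v2 : ℝ) * (1 - q) * φ) /
          ((u2 : ℝ) * φ + (v2 : ℝ) * (1 - q) * φ + μ) ≤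
        φ * (((u1 : ℝ) + 1) * φ + (v1 : ℝ) * (1 - q) * φ) /
          (((u1 : ℝ) + 1) * φ + (v1 : ℝ) * (1 - q) * φ + μ)) ∧
  (0 < u2 →
      φ * ((u2 : ℝ) * φ + (v2 : ℝ) * (1 - q) * φ) /
          ((u2 : ℝ) * φ + (v2 : ℝ) * (1 - q) * φ + μ) ≤
        q * φ + (1 - q) * φ *
            ((u1 : ℝ) * φ + ((v1 : ℝ) + 1) * (1 - q) * φ) /
          ((u1 : ℝ) * φ + ((v1 : ℝ) + 1) * (1 - q) * φ + μ)) ∧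
  (0 < v1 →
      q * φ + (1 - q) * φ *
          ((u1 : ℝ) * φ + (v1 : ℝ) * (1 - q) * φ) /
          ((u1 : ℝ) * φ + (v1 : ℝ) * (1 - q) * φ + μ) ≤
        φ * (((u2 : ℝ) + 1) * φ + (v2 : ℝ) * (1 - q) * φ) /
          (((u2 : ℝ) + 1) * φ + (v2 : ℝ) * (1 - q) * φ + μ))


lemma key_ineq (φ μ q : ℝ) (hφ : 0 < φ) (hμ : 0 < μ) (A B : ℝ)
    (hA : 0 < A + μ) (hB : 0 < B + μ) :
    (φ * A / (A + μ) ≤ q * φ + (1 - q) * φ * B / (B + μ)) ↔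
      (1 - q) * A ≤ B + q * μ := by
  rw [add_div' _ _ _ hB.ne', div_le_div_iff₀ hA hB]
  constructor <;> intro h <;> nlinarith [mul_pos hφ hμ]

/-- In the two-source game, the all-direct profile (`u1 = n1`, `u2 = n2`,
no relaying) is a Nash equilibrium iff `n1 q̄ ≤ qμ/φ + n2 + q̄`. -/
theorem two_source_all_direct_NE_iff (φ μ q : ℝ) (hφ : 0 < φ) (hμ : 0 < μ)
    (hq0 : 0 ≤ q) (hq1 : q ≤ 1) (n1 n2 : ℕ) (hn : n2 ≤ n1) (hn2 : 1 ≤ n2) :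
    NE2 φ μ q n1 0 n2 0 ↔
      (n1 : ℝ) * (1 - q) ≤ q * μ / φ + (n2 : ℝ) + (1 - q) := by
  have hq' : 0 ≤ 1 - q := by linarith
  have hn1 : 0 < n1 := lt_of_lt_of_le hn2 hn
  have hn1' : (1:ℝ) ≤ (n1:ℝ) := by exact_mod_cast hn1
  have hn2' : (1:ℝ) ≤ (n2:ℝ) := by exact_mod_cast hn2
  have hnn : (n2:ℝ) ≤ (n1:ℝ) := by exact_mod_cast hn
  have hA1 : (0:ℝ) < (n1:ℝ) * φ + ((0:ℕ):ℝ) * (1-q) * φ + μ := by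
    push_cast; nlinarith
  have hA2 : (0:ℝ) < (n2:ℝ) * φ + ((0:ℕ):ℝ) * (1-q) * φ + μ := by
    push_cast; nlinarith
  have hB1 : (0:ℝ) < (n1:ℝ) * φ + (((0:ℕ):ℝ) + 1) * (1-q) * φ + μ := by
    push_cast; nlinarith
  have hB2 : (0:ℝ) < (n2:ℝ) * φ + (((0:ℕ):ℝ) + 1) * (1-q) * φ + μ := by
    push_cast; nlinarith
  unfold NE2
  simp only [Nat.lt_irrefl, false_implies, and_true, true_and, hn1, hn2, Nat.lt_of_lt_of_le Nat.zero_lt_one hn2, true_implies]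
  rw [key_ineq φ μ q hφ hμ _ _ hA1 hB2, key_ineq φ μ q hφ hμ _ _ hA2 hB1]
  have hqμφ : q * μ / φ * φ = q * μ := div_mul_cancel₀ _ hφ.ne'
  have hqμφ' : 0 ≤ q * μ / φ := div_nonneg (mul_nonneg hq0 hμ.le) hφ.le
  push_cast
  constructor
  · rintro ⟨h1, -⟩
    nlinarith [hqμφ, hφ]
  · intro h
    have h' : (n1:ℝ)*(1-q)*φ ≤ (q*μ/φ + (n2:ℝ) + (1-q))*φ :=
      mul_le_mul_of_nonneg_right h hφ.le
    refine ⟨by nlinarith [h', hqμφ], ?_⟩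
    nlinarith [mul_nonneg hq0 hμ.le, mul_nonneg hq' hφ.le,
      mul_nonneg (mul_nonneg hq0 (zero_le_one.trans hn2')) hφ.le,
      mul_le_mul_of_nonneg_right hnn hφ.le]
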